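/- Let D be a finite set, γ: D → ℝ^d a map whose image spans ℝ^d, and λ₁,…,λₙ ∈ ℝ^d vectors spanning ℝ^d. Suppose g and f are maps satisfying ⟨g(γ(x)), f(λᵢ)⟩ = ⟨γ(x), λᵢ⟩ for all x ∈ D and all i, and suppose there exist d linearly independent vectors among the λᵢ whose images under f remain linearly independent. Then there exists a unique invertible matrix A ∈ GL(d, ℝ) such that g(γ(x)) = A⁻ᵀ γ(x) for all x ∈ D and f(λᵢ) = A λᵢ for all i. -/

import Mathlib

open Matrix

lemma dot_ext_aux {d : ℕ} {S : Set (Fin d → ℝ)} (hS : Submodule.span ℝ S = ⊤)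
    {v w : Fin d → ℝ} (h : ∀ u ∈ S, u ⬝ᵥ v = u ⬝ᵥ w) : v = w := by
  have hφ : ∀ u : Fin d → ℝ, u ⬝ᵥ (v - w) = 0 := by
    let φ : (Fin d → ℝ) →ₗ[ℝ] ℝ :=
      { toFun := fun u => u ⬝ᵥ (v - w)
        map_add' := fun a b => add_dotProduct a b _
        map_smul' := fun c a => smul_dotProduct c a _ }
    have hφ0 : φ = 0 := LinearMap.ext_on hS (fun u hu => by
      simp only [φ, LinearMap.coe_mk, AddHom.coe_mk, LinearMap.zero_apply,
        dotProduct_sub, h u hu, sub_self])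
    intro u
    have := congrFun (congrArg DFunLike.coe hφ0) u
    simpa [φ] using this
  have h0 : (v - w) ⬝ᵥ (v - w) = 0 := hφ _
  have := dotProduct_self_eq_zero.mp h0
  exact sub_eq_zero.mp this

/-- Linear-head equivalence: output-equivalent bilinear readouts are related by a
unique invertible linear change of coordinates. -/
theorem stmt0 {d n : ℕ} {D : Type*} [Fintype D]
    (γ : D → (Fin d → ℝ)) (lam : Fin n → (Fin d → ℝ))
    (hγ : Submodule.span ℝ (Set.range γ) = ⊤)
    (hlam : Submodule.span ℝ (Set.range lam) = ⊤)
    (g f : (Fin d → ℝ) → (Fin d → ℝ))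
    (hpair : ∀ (x : D) (i : Fin n), g (γ x) ⬝ᵥ f (lam i) = γ x ⬝ᵥ lam i)
    (hind : ∃ s : Fin d → Fin n,
      LinearIndependent ℝ (fun j => lam (s j)) ∧
      LinearIndependent ℝ (fun j => f (lam (s j)))) :
    ∃! A : Matrix (Fin d) (Fin d) ℝ, IsUnit A.det ∧
      (∀ x : D, g (γ x) = (A⁻¹)ᵀ.mulVec (γ x)) ∧
      (∀ i : Fin n, f (lam i) = A.mulVec (lam i)) := by
  obtain ⟨s, hli, hli'⟩ := hind
  have hcard : Fintype.card (Fin d) = Module.finrank ℝ (Fin d → ℝ) := by simp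
  let b : Module.Basis (Fin d) ℝ (Fin d → ℝ) :=
    Module.Basis.mk hli (hli.span_eq_top_of_card_eq_finrank' hcard).ge
  let b' : Module.Basis (Fin d) ℝ (Fin d → ℝ) :=
    Module.Basis.mk hli' (hli'.span_eq_top_of_card_eq_finrank' hcard).ge
  have hb : ∀ j, b j = lam (s j) := fun j => by simp [b]
  have hb' : ∀ j, b' j = f (lam (s j)) := fun j => by simp [b']
  let L := b.equiv b' (Equiv.refl _)
  let A := LinearMap.toMatrix' (L : (Fin d → ℝ) →ₗ[ℝ] (Fin d → ℝ))
  have hAmul : ∀ v, A.mulVec v = L v := fun v => by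
    rw [← Matrix.toLin'_apply]
    simp only [A, Matrix.toLin'_toMatrix', LinearEquiv.coe_coe]
  have hAb : ∀ j, A.mulVec (lam (s j)) = f (lam (s j)) := fun j => by
    rw [hAmul, ← hb' j, ← hb j, Module.Basis.equiv_apply, Equiv.refl_apply]
  have hdet : IsUnit A.det := by
    have h1 : A.det = LinearMap.det (L : (Fin d → ℝ) →ₗ[ℝ] (Fin d → ℝ)) :=
      LinearMap.det_toMatrix' _
    rw [h1]
    exact LinearEquiv.isUnit_det' L
  have hinv : A⁻¹ * A = 1 := nonsing_inv_mul A hdet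
  have hinv' : A * A⁻¹ = 1 := mul_nonsing_inv A hdet
  have hAinv : ∀ j, A⁻¹.mulVec (f (lam (s j))) = lam (s j) := fun j => by
    rw [← hAb j, mulVec_mulVec, hinv, one_mulVec]
  -- g part
  have hg : ∀ x, g (γ x) = (A⁻¹)ᵀ.mulVec (γ x) := by
    intro x
    refine dot_ext_aux b'.span_eq ?_
    rintro u ⟨j, rfl⟩
    rw [dotProduct_mulVec, vecMul_transpose, hb' j, hAinv j, dotProduct_comm,
      hpair x (s j), dotProduct_comm]
  -- f part
  have hf : ∀ i, f (lam i) = A.mulVec (lam i) := by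
    intro i
    have key : A⁻¹.mulVec (f (lam i)) = lam i := by
      refine dot_ext_aux hγ ?_
      rintro u ⟨x, rfl⟩
      rw [dotProduct_mulVec, ← mulVec_transpose, ← hg x, hpair x i]
    conv_rhs => rw [← key, mulVec_mulVec, hinv', one_mulVec]
  refine ⟨A, ⟨hdet, hg, hf⟩, ?_⟩
  rintro A' ⟨hdet', hg', hf'⟩
  have hmv : ∀ i, A'.mulVec (lam i) = A.mulVec (lam i) := fun i => by
    rw [← hf' i, hf i]
  have : Matrix.toLin' A' = Matrix.toLin' A := by
    refine LinearMap.ext_on hlam ?_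
    rintro u ⟨i, rfl⟩
    simp only [Matrix.toLin'_apply, hmv i]
  exact Matrix.toLin'.injective this
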